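/- If u is a smooth solution of i∂ₜu + (1/2)Δu = (ω²|x|²/2)u + λ|u|^{4/n}u on (-τ,τ) × ℝⁿ with 0 < ωτ < π/2, then v(t,x) = (1+(ωt)²)^{-n/4} e^{iω²t|x|²/(2(1+(ωt)²))} u(arctan(ωt)/ω, x/√(1+(ωt)²)) is a smooth solution of the critical NLS i∂ₜv + (1/2)Δv = λ|v|^{4/n}v on (-tan(ωτ)/ω, tan(ωτ)/ω) × ℝⁿ. -/

import Mathlib

/-- The Laplacian of a complex-valued function on `ℝⁿ`, as a sum of second partial
derivatives along the coordinate directions. -/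
noncomputable def laplacianC {n : ℕ} (f : EuclideanSpace ℝ (Fin n) → ℂ)
    (x : EuclideanSpace ℝ (Fin n)) : ℂ :=
  ∑ i : Fin n, fderiv ℝ (fun y => fderiv ℝ f y (EuclideanSpace.single i 1)) x
    (EuclideanSpace.single i 1)

section LensAux
open Real Complex

variable {n : ℕ}
local notation "E" => EuclideanSpace ℝ (Fin n)

noncomputable def lensPhase (b : ℝ) (y : EuclideanSpace ℝ (Fin n)) : ℂ :=
  Complex.exp (Complex.I * ((b * ‖y‖^2/2 : ℝ) : ℂ))

lemma lensPhase_hasFDerivAt (b : ℝ) (y : E) :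
    HasFDerivAt (lensPhase (n := n) b)
      ((lensPhase b y * (Complex.I * b)) • (Complex.ofRealCLM.comp (innerSL ℝ y))) y := by
  have hq : HasFDerivAt (fun y : E => ‖y‖^2) (2 • (innerSL ℝ y)) y :=
    (hasStrictFDerivAt_norm_sq y).hasFDerivAt
  have h1 : HasFDerivAt (fun y : E => b * ‖y‖^2/2) ((b/2) • (2 • (innerSL ℝ y))) y := by
    have := hq.const_mul (b/2)
    refine this.congr_of_eventuallyEq (Filter.Eventually.of_forall fun z => ?_)
    ring
  have h2 := (Complex.ofRealCLM.hasFDerivAt.comp y h1)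
  have h3 := h2.const_mul Complex.I
  have h4 := h3.cexp
  refine (show HasFDerivAt (lensPhase (n := n) b) _ y from h4).congr_fderiv ?_
  ext w
  simp only [ContinuousLinearMap.smul_apply, ContinuousLinearMap.comp_apply,
    Complex.ofRealCLM_apply, Function.comp, lensPhase, smul_eq_mul]
  push_cast
  ring

noncomputable def scaleCLM (r : ℝ) : EuclideanSpace ℝ (Fin n) →L[ℝ] EuclideanSpace ℝ (Fin n) :=
  r • ContinuousLinearMap.id ℝ (EuclideanSpace ℝ (Fin n))

lemma scale_hasFDerivAt (r : ℝ) (y : E) :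
    HasFDerivAt (fun z : E => r • z) (scaleCLM (n := n) r) y := by
  exact (scaleCLM (n := n) r).hasFDerivAt (x := y)

lemma g_hasFDerivAt (f : E → ℂ) (A : ℂ) (b r : ℝ) (y : E)
    (hfd : DifferentiableAt ℝ f (r • y)) :
    HasFDerivAt (fun z : E => A * lensPhase b z * f (r • z))
      (A • (lensPhase b y • ((fderiv ℝ f (r • y)).comp (scaleCLM r))
        + f (r • y) • (lensPhase b y * (Complex.I * b)) •
            (Complex.ofRealCLM.comp (innerSL ℝ y)))) y := by
  have hfs : HasFDerivAt (fun z : E => f (r • z)) ((fderiv ℝ f (r • y)).comp (scaleCLM r)) y :=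
    (hfd.hasFDerivAt).comp y (scale_hasFDerivAt r y)
  have h := ((lensPhase_hasFDerivAt b y).mul hfs).const_mul A
  simpa [mul_assoc] using h

lemma g_fderiv_apply (f : E → ℂ) (A : ℂ) (b r : ℝ) (y : E) (i : Fin n)
    (hfd : DifferentiableAt ℝ f (r • y)) :
    fderiv ℝ (fun z : E => A * lensPhase b z * f (r • z)) y (EuclideanSpace.single i 1)
      = A * lensPhase b y * (f (r • y) * (Complex.I * b) * (y i)
          + r * fderiv ℝ f (r • y) (EuclideanSpace.single i 1)) := by
  rw [(g_hasFDerivAt f A b r y hfd).fderiv]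
  simp only [ContinuousLinearMap.smul_apply, ContinuousLinearMap.add_apply,
    ContinuousLinearMap.comp_apply, Complex.ofRealCLM_apply, smul_eq_mul, scaleCLM,
    ContinuousLinearMap.id_apply, innerSL_apply_apply, EuclideanSpace.inner_single_right,
    map_smul, Complex.real_smul, starRingEnd_apply, star_trivial]
  push_cast
  ring

lemma second_term (f : E → ℂ) (hf : ContDiff ℝ 2 f) (A : ℂ) (b r : ℝ) (x : E) (i : Fin n) :
    fderiv ℝ (fun z : E => fderiv ℝ (fun w : E => A * lensPhase b w * f (r • w)) z
        (EuclideanSpace.single i 1)) x (EuclideanSpace.single i 1)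
      = A * lensPhase b x * ((Complex.I * b) * f (r • x)
          - (b:ℂ)^2 * ((x i : ℝ):ℂ)^2 * f (r • x)
          + 2 * Complex.I * b * r * ((x i : ℝ):ℂ) * fderiv ℝ f (r • x) (EuclideanSpace.single i 1)
          + (r:ℂ)^2 * fderiv ℝ (fun z => fderiv ℝ f z (EuclideanSpace.single i 1)) (r • x)
              (EuclideanSpace.single i 1)) := by
  have hfd : Differentiable ℝ f := hf.differentiable (by norm_num)
  have hDdiff : Differentiable ℝ (fun z : E => fderiv ℝ f z (EuclideanSpace.single i 1)) := by
    have h1 : ContDiff ℝ 1 (fderiv ℝ f) := hf.fderiv_right (by norm_num)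
    exact (h1.clm_apply contDiff_const).differentiable (by norm_num)
  have heq : (fun z : E => fderiv ℝ (fun w : E => A * lensPhase b w * f (r • w)) z
      (EuclideanSpace.single i 1))
      = fun z : E => A * lensPhase b z * (f (r • z) * (Complex.I * b) * ((z i : ℝ):ℂ)
          + (r:ℂ) * fderiv ℝ f (r • z) (EuclideanSpace.single i 1)) := by
    funext z
    exact g_fderiv_apply f A b r z i (hfd _)
  rw [heq]
  have hphase : HasFDerivAt (fun z : E => A * lensPhase b z)
      (A • ((lensPhase b x * (Complex.I * b)) • (Complex.ofRealCLM.comp (innerSL ℝ x)))) x :=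
    (lensPhase_hasFDerivAt b x).const_mul A
  have hfs : HasFDerivAt (fun z : E => f (r • z)) ((fderiv ℝ f (r • x)).comp (scaleCLM r)) x :=
    ((hfd _).hasFDerivAt).comp x (scale_hasFDerivAt r x)
  have hzi : HasFDerivAt (fun z : E => ((z i : ℝ):ℂ))
      (Complex.ofRealCLM.comp (EuclideanSpace.proj i)) x := by
    have hp : HasFDerivAt (fun z : E => z i) (EuclideanSpace.proj (𝕜 := ℝ) i) x :=
      (EuclideanSpace.proj (𝕜 := ℝ) i).hasFDerivAt
    exact Complex.ofRealCLM.hasFDerivAt.comp x hp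
  have hDf : HasFDerivAt (fun z : E => fderiv ℝ f (r • z) (EuclideanSpace.single i 1))
      ((fderiv ℝ (fun z => fderiv ℝ f z (EuclideanSpace.single i 1)) (r • x)).comp (scaleCLM r))
      x := ((hDdiff (r • x)).hasFDerivAt).comp x (scale_hasFDerivAt r x)
  have hbr := ((hfs.mul_const (Complex.I * b)).mul hzi).add (hDf.const_mul ((r:ℝ):ℂ))
  have h : HasFDerivAt (fun z : E => A * lensPhase b z * (f (r • z) * (Complex.I * b) * ((z i : ℝ):ℂ)
      + (r:ℂ) * fderiv ℝ f (r • z) (EuclideanSpace.single i 1))) _ x := hphase.mul hbr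
  rw [h.fderiv]
  simp only [ContinuousLinearMap.smul_apply, ContinuousLinearMap.add_apply,
    ContinuousLinearMap.comp_apply, Complex.ofRealCLM_apply, smul_eq_mul, scaleCLM,
    ContinuousLinearMap.id_apply, innerSL_apply_apply, EuclideanSpace.inner_single_right,
    map_smul, Complex.real_smul, starRingEnd_apply, star_trivial]
  have hps : (EuclideanSpace.proj (𝕜 := ℝ) i) (EuclideanSpace.single i 1) = (1:ℝ) := by
    simp [EuclideanSpace.single_apply]
  rw [hps]
  push_cast
  ring_nf
  simp only [Complex.I_sq]
  ring

lemma lap_formula (f : E → ℂ) (hf : ContDiff ℝ 2 f) (A : ℂ) (b r : ℝ) (x : E) :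
    laplacianC (fun y => A * lensPhase b y * f (r • y)) x
      = A * lensPhase b x * ((Complex.I * b * n) * f (r • x)
          - (b:ℂ)^2 * ((‖x‖^2 : ℝ):ℂ) * f (r • x)
          + 2 * Complex.I * b * r * (fderiv ℝ f (r • x) x)
          + (r:ℂ)^2 * laplacianC f (r • x)) := by
  unfold laplacianC
  have hterm := fun i => second_term f hf A b r x i
  rw [Finset.sum_congr rfl (fun i _ => hterm i)]
  have hxrepr : x = ∑ i, x i • EuclideanSpace.single i 1 := by
    ext j
    have : (∑ i : Fin n, x i • EuclideanSpace.single i 1 : E) j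
        = ∑ i : Fin n, (x i • (EuclideanSpace.single i 1 : E)) j :=
      by rw [WithLp.ofLp_sum, Finset.sum_apply]
    rw [this]
    simp [EuclideanSpace.single_apply]
  have hsum : (fderiv ℝ f (r • x)) x
      = ∑ i, ((x i : ℝ):ℂ) * (fderiv ℝ f (r • x)) (EuclideanSpace.single i 1) := by
    have h2 : (fderiv ℝ f (r • x)) (∑ i, x i • EuclideanSpace.single i 1)
        = ∑ i, ((x i : ℝ):ℂ) * (fderiv ℝ f (r • x)) (EuclideanSpace.single i 1) := by
      rw [map_sum]
      simp [Complex.real_smul]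
    rw [← hxrepr] at h2
    exact h2
  have hnorm : ((‖x‖^2 : ℝ):ℂ) = ∑ i, ((x i : ℝ):ℂ)^2 := by
    have : (‖x‖^2 : ℝ) = ∑ i, (x i)^2 := by
      rw [EuclideanSpace.norm_eq, Real.sq_sqrt (by positivity)]
      simp [Real.norm_eq_abs, _root_.sq_abs]
    rw [this]
    push_cast
    rfl
  have hconst : (Complex.I * b * n) * f (r • x)
      = ∑ _i : Fin n, Complex.I * b * f (r • x) := by
    simp only [Finset.sum_const, Finset.card_univ, Fintype.card_fin, nsmul_eq_mul]
    ring
  rw [hsum, hnorm, hconst]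
  simp only [mul_add, mul_sub, Finset.mul_sum, Finset.sum_mul, ← Finset.sum_add_distrib,
    ← Finset.sum_sub_distrib]
  refine Finset.sum_congr rfl fun i _ => by ring

end LensAux


open Real Complex

set_option maxHeartbeats 2000000 in
/-- The inverse lens transform maps solutions of the critical NLS with harmonic
potential to solutions of the critical NLS. -/
theorem inverse_lens_transform_of_harmonic_NLS
    (n : ℕ) (hn : 1 ≤ n) (ω lam τ : ℝ) (hω : 0 < ω) (hτ : 0 < τ) (hτ' : τ < Real.pi / (2 * ω))
    (u v : ℝ → EuclideanSpace ℝ (Fin n) → ℂ)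
    (hureg : ContDiffOn ℝ 2 (fun p : ℝ × EuclideanSpace ℝ (Fin n) => u p.1 p.2)
      (Set.Ioo (-τ) τ ×ˢ Set.univ))
    (hu : ∀ t x, |t| < τ →
      Complex.I * deriv (fun s => u s x) t + (1 / 2) * laplacianC (u t) x
        = ((ω : ℂ) ^ 2 * (‖x‖ : ℂ) ^ 2 / 2) * u t x
          + (lam : ℂ) * ((‖u t x‖ ^ ((4 : ℝ) / n) : ℝ) : ℂ) * u t x)
    (hv : ∀ t x, v t x = (((1 + (ω * t) ^ 2) ^ (-(n : ℝ) / 4) : ℝ) : ℂ)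
        * Complex.exp (Complex.I * (ω : ℂ) ^ 2 * (t : ℂ) * (‖x‖ : ℂ) ^ 2
            / (2 * (1 + ((ω : ℂ) * (t : ℂ)) ^ 2)))
        * u (Real.arctan (ω * t) / ω) ((Real.sqrt (1 + (ω * t) ^ 2))⁻¹ • x)) :
    ∀ t x, |t| < Real.tan (ω * τ) / ω →
      Complex.I * deriv (fun s => v s x) t + (1 / 2) * laplacianC (v t) x
        = (lam : ℂ) * ((‖v t x‖ ^ ((4 : ℝ) / n) : ℝ) : ℂ) * v t x := by
  intro t x ht
  have hc : (0:ℝ) < 1 + (ω*t)^2 := by positivity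
  -- v in normalized form
  have hvW : ∀ s (x' : EuclideanSpace ℝ (Fin n)), v s x'
      = (((1 + (ω*s)^2) ^ (-(n:ℝ)/4) : ℝ):ℂ) * lensPhase (ω^2*s/(1+(ω*s)^2)) x'
        * u (Real.arctan (ω*s)/ω) ((Real.sqrt (1+(ω*s)^2))⁻¹ • x') := by
    intro s x'
    rw [hv]
    have hcs : (0:ℝ) < 1 + (ω*s)^2 := by positivity
    have h2 : (1:ℂ) + ((ω:ℂ)*(s:ℂ))^2 ≠ 0 := by
      have he : ((1 + (ω*s)^2 : ℝ):ℂ) = 1 + ((ω:ℂ)*(s:ℂ))^2 := by push_cast; ring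
      rw [← he]
      exact_mod_cast hcs.ne'
    congr 1
    congr 1
    unfold lensPhase
    congr 1
    push_cast
    field_simp
  -- bound on the transformed time
  have hs₀ : |Real.arctan (ω*t)/ω| < τ := by
    have hωτpos : 0 < ω*τ := mul_pos hω hτ
    have hωτ : ω*τ < Real.pi/2 := by
      have := (lt_div_iff₀ (by positivity : (0:ℝ) < 2*ω)).mp hτ'
      nlinarith
    have habs : |ω*t| < Real.tan (ω*τ) := by
      have h1 : |ω*t| = ω * |t| := by rw [abs_mul, abs_of_pos hω]
      rw [h1]
      calc ω * |t| < ω * (Real.tan (ω*τ)/ω) := by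
            exact mul_lt_mul_of_pos_left ht hω
        _ = Real.tan (ω*τ) := by field_simp
    have harc : |Real.arctan (ω*t)| < ω*τ := by
      rw [abs_lt] at habs ⊢
      constructor
      · have := Real.arctan_strictMono habs.1
        rwa [Real.arctan_neg, Real.arctan_tan (by linarith) hωτ] at this
      · have := Real.arctan_strictMono habs.2
        rwa [Real.arctan_tan (by linarith) hωτ] at this
    rw [abs_div, abs_of_pos hω, div_lt_iff₀ hω]
    linarith [harc]
  have hs₀mem : Real.arctan (ω*t)/ω ∈ Set.Ioo (-τ) τ := by
    rw [Set.mem_Ioo]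
    rw [abs_lt] at hs₀
    exact ⟨hs₀.1, hs₀.2⟩
  have hSopen : IsOpen (Set.Ioo (-τ) τ ×ˢ (Set.univ : Set (EuclideanSpace ℝ (Fin n)))) :=
    isOpen_Ioo.prod isOpen_univ
  -- C² of the spatial slice
  have hu2 : ContDiff ℝ 2 (u (Real.arctan (ω*t)/ω)) := by
    rw [← contDiffOn_univ]
    have hmaps : Set.MapsTo (fun x' : EuclideanSpace ℝ (Fin n) => ((Real.arctan (ω*t)/ω : ℝ), x'))
        Set.univ (Set.Ioo (-τ) τ ×ˢ (Set.univ : Set (EuclideanSpace ℝ (Fin n)))) := by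
      intro x' _
      exact ⟨hs₀mem, trivial⟩
    exact hureg.comp ((contDiff_const.prodMk contDiff_id).contDiffOn) hmaps
  -- Laplacian of v t
  have hvt : v t = fun x' => (((1 + (ω*t)^2) ^ (-(n:ℝ)/4) : ℝ):ℂ)
      * lensPhase (ω^2*t/(1+(ω*t)^2)) x'
      * u (Real.arctan (ω*t)/ω) ((Real.sqrt (1+(ω*t)^2))⁻¹ • x') := funext (hvW t)
  have hlap := lap_formula (u (Real.arctan (ω*t)/ω)) hu2
    ((((1 + (ω*t)^2) ^ (-(n:ℝ)/4) : ℝ)):ℂ) (ω^2*t/(1+(ω*t)^2)) ((Real.sqrt (1+(ω*t)^2))⁻¹) x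
  rw [← hvt] at hlap
  -- time derivative building blocks
  have h0 : HasDerivAt (fun s : ℝ => ω*s) ω t := by simpa using (hasDerivAt_id t).const_mul ω
  have hcder : HasDerivAt (fun s => 1 + (ω*s)^2) (2*(ω*t)*ω) t := by
    simpa using (h0.pow 2).const_add 1
  have hαder : HasDerivAt (fun s => ((1 + (ω*s)^2) ^ (-(n:ℝ)/4) : ℝ))
      ((2*(ω*t)*ω) * (-(n:ℝ)/4) * (1 + (ω*t)^2) ^ ((-(n:ℝ)/4) - 1)) t :=
    hcder.rpow_const (Or.inl hc.ne')
  have hαC := hαder.ofReal_comp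
  have hβder : HasDerivAt (fun s => ω^2*s/(1 + (ω*s)^2))
      ((ω^2 * (1 + (ω*t)^2) - ω^2*t*(2*(ω*t)*ω)) / (1 + (ω*t)^2)^2) t := by
    have h1 : HasDerivAt (fun s : ℝ => ω^2*s) (ω^2) t := by
      simpa using (hasDerivAt_id t).const_mul (ω^2)
    exact h1.div hcder (by positivity)
  have hexpder : HasDerivAt (fun s => lensPhase (ω^2*s/(1+(ω*s)^2)) x)
      (lensPhase (ω^2*t/(1+(ω*t)^2)) x * (Complex.I *
        ((((ω^2 * (1 + (ω*t)^2) - ω^2*t*(2*(ω*t)*ω)) / (1 + (ω*t)^2)^2) * ‖x‖^2/2 : ℝ):ℂ))) t := by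
    have h1 := (hβder.mul_const (‖x‖^2)).div_const 2
    have h2 := h1.ofReal_comp
    have h3 := h2.const_mul Complex.I
    have h4 := h3.cexp
    simpa [lensPhase] using h4
  have hσder : HasDerivAt (fun s => Real.arctan (ω*s)/ω) (1/(1+(ω*t)^2)) t := by
    have h1 : HasDerivAt (fun s => Real.arctan (ω*s)) (1/(1+(ω*t)^2) * ω) t :=
      (Real.hasDerivAt_arctan (ω*t)).comp t h0
    have h2 := h1.div_const ω
    refine h2.congr_deriv ?_
    field_simp
  have hρder : HasDerivAt (fun s => (Real.sqrt (1+(ω*s)^2))⁻¹)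
      (-((2*(ω*t)*ω) / (2 * Real.sqrt (1+(ω*t)^2))) / (Real.sqrt (1+(ω*t)^2))^2) t := by
    have h1 : HasDerivAt (fun s => Real.sqrt (1+(ω*s)^2))
        (1/(2*Real.sqrt (1+(ω*t)^2)) * (2*(ω*t)*ω)) t :=
      (Real.hasDerivAt_sqrt hc.ne').comp t hcder
    have h2 := h1.inv (by positivity)
    refine h2.congr_deriv ?_
    field_simp
  have hγ := hσder.prodMk (hρder.smul_const x)
  have hmemp : ((Real.arctan (ω*t)/ω : ℝ), (Real.sqrt (1+(ω*t)^2))⁻¹ • x) ∈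
      Set.Ioo (-τ) τ ×ˢ (Set.univ : Set (EuclideanSpace ℝ (Fin n))) := ⟨hs₀mem, trivial⟩
  have hFdiff : DifferentiableAt ℝ (fun p : ℝ × EuclideanSpace ℝ (Fin n) => u p.1 p.2)
      ((Real.arctan (ω*t)/ω : ℝ), (Real.sqrt (1+(ω*t)^2))⁻¹ • x) :=
    ((hureg.differentiableOn (by norm_num)).differentiableAt (hSopen.mem_nhds hmemp))
  have hFcomp := (hFdiff.hasFDerivAt).comp_hasDerivAt t hγ
  have hFcomp' : HasDerivAt
      (fun s => u (Real.arctan (ω*s)/ω) ((Real.sqrt (1+(ω*s)^2))⁻¹ • x))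
      ((fderiv ℝ (fun p : ℝ × EuclideanSpace ℝ (Fin n) => u p.1 p.2)
          ((Real.arctan (ω*t)/ω : ℝ), (Real.sqrt (1+(ω*t)^2))⁻¹ • x))
        ((1/(1+(ω*t)^2) : ℝ),
          (-((2*(ω*t)*ω) / (2 * Real.sqrt (1+(ω*t)^2))) / (Real.sqrt (1+(ω*t)^2))^2 : ℝ) • x))
      t := hFcomp
  have htotal : HasDerivAt (fun s => (((1 + (ω*s)^2) ^ (-(n:ℝ)/4) : ℝ):ℂ) * lensPhase (ω^2*s/(1+(ω*s)^2)) x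
      * u (Real.arctan (ω*s)/ω) ((Real.sqrt (1+(ω*s)^2))⁻¹ • x)) _ t :=
    (hαC.mul hexpder).mul hFcomp'
  simp only [Pi.mul_apply] at htotal
  have hfeq : (fun s => v s x) = fun s =>
      (((1 + (ω*s)^2) ^ (-(n:ℝ)/4) : ℝ):ℂ) * lensPhase (ω^2*s/(1+(ω*s)^2)) x
        * u (Real.arctan (ω*s)/ω) ((Real.sqrt (1+(ω*s)^2))⁻¹ • x) := funext fun s => hvW s x
  rw [hfeq, htotal.deriv, hlap]
  -- decompose the mixed derivative
  have hT : fderiv ℝ (fun p : ℝ × EuclideanSpace ℝ (Fin n) => u p.1 p.2)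
      ((Real.arctan (ω*t)/ω : ℝ), (Real.sqrt (1+(ω*t)^2))⁻¹ • x) ((1:ℝ),(0:EuclideanSpace ℝ (Fin n)))
      = deriv (fun s' => u s' ((Real.sqrt (1+(ω*t)^2))⁻¹ • x)) (Real.arctan (ω*t)/ω) := by
    have hcv : HasDerivAt (fun s' => u s' ((Real.sqrt (1+(ω*t)^2))⁻¹ • x))
        (fderiv ℝ (fun p : ℝ × EuclideanSpace ℝ (Fin n) => u p.1 p.2)
          ((Real.arctan (ω*t)/ω : ℝ), (Real.sqrt (1+(ω*t)^2))⁻¹ • x)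
          ((1:ℝ),(0:EuclideanSpace ℝ (Fin n)))) (Real.arctan (ω*t)/ω) :=
      by
        have h := hFdiff.hasFDerivAt.comp_hasDerivAt (Real.arctan (ω*t)/ω)
          ((hasDerivAt_id (Real.arctan (ω*t)/ω)).prodMk (hasDerivAt_const (Real.arctan (ω*t)/ω) ((Real.sqrt (1+(ω*t)^2))⁻¹ • x)))
        exact h
    exact hcv.deriv.symm
  have hP : fderiv ℝ (fun p : ℝ × EuclideanSpace ℝ (Fin n) => u p.1 p.2)
      ((Real.arctan (ω*t)/ω : ℝ), (Real.sqrt (1+(ω*t)^2))⁻¹ • x) ((0:ℝ), x)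
      = fderiv ℝ (u (Real.arctan (ω*t)/ω)) ((Real.sqrt (1+(ω*t)^2))⁻¹ • x) x := by
    have husd : HasFDerivAt (u (Real.arctan (ω*t)/ω))
        ((fderiv ℝ (fun p : ℝ × EuclideanSpace ℝ (Fin n) => u p.1 p.2)
            ((Real.arctan (ω*t)/ω : ℝ), (Real.sqrt (1+(ω*t)^2))⁻¹ • x)).comp
          (ContinuousLinearMap.inr ℝ ℝ (EuclideanSpace ℝ (Fin n))))
        ((Real.sqrt (1+(ω*t)^2))⁻¹ • x) :=
      hFdiff.hasFDerivAt.comp _ (hasFDerivAt_prodMk_right _ _)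
    rw [husd.fderiv]
    simp
  have hsplit : fderiv ℝ (fun p : ℝ × EuclideanSpace ℝ (Fin n) => u p.1 p.2)
      ((Real.arctan (ω*t)/ω : ℝ), (Real.sqrt (1+(ω*t)^2))⁻¹ • x)
        ((1/(1+(ω*t)^2) : ℝ),
          (-((2*(ω*t)*ω) / (2 * Real.sqrt (1+(ω*t)^2))) / (Real.sqrt (1+(ω*t)^2))^2 : ℝ) • x)
      = ((1/(1+(ω*t)^2) : ℝ):ℂ) * deriv (fun s' => u s' ((Real.sqrt (1+(ω*t)^2))⁻¹ • x))
            (Real.arctan (ω*t)/ω)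
        + ((-((2*(ω*t)*ω) / (2 * Real.sqrt (1+(ω*t)^2))) / (Real.sqrt (1+(ω*t)^2))^2 : ℝ):ℂ)
            * fderiv ℝ (u (Real.arctan (ω*t)/ω)) ((Real.sqrt (1+(ω*t)^2))⁻¹ • x) x := by
    have hpair : ((1/(1+(ω*t)^2) : ℝ),
          (-((2*(ω*t)*ω) / (2 * Real.sqrt (1+(ω*t)^2))) / (Real.sqrt (1+(ω*t)^2))^2 : ℝ) • x)
        = (1/(1+(ω*t)^2) : ℝ) • ((1:ℝ),(0:EuclideanSpace ℝ (Fin n)))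
          + (-((2*(ω*t)*ω) / (2 * Real.sqrt (1+(ω*t)^2))) / (Real.sqrt (1+(ω*t)^2))^2 : ℝ)
              • ((0:ℝ), x) := by
      simp [Prod.ext_iff]
    rw [hpair, map_add, map_smul, map_smul, hT, hP, Complex.real_smul, Complex.real_smul]
  rw [hsplit]
  have hn0 : (n:ℝ) ≠ 0 := Nat.cast_ne_zero.mpr (by omega)
  have hnormv : ‖v t x‖ ^ ((4:ℝ)/n)
      = (1+(ω*t)^2)⁻¹ * ‖u (Real.arctan (ω*t)/ω) ((Real.sqrt (1+(ω*t)^2))⁻¹ • x)‖ ^ ((4:ℝ)/n) := by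
    rw [hvW t x, norm_mul, norm_mul]
    have h1 : ‖(((1 + (ω*t)^2) ^ (-(n:ℝ)/4) : ℝ):ℂ)‖ = (1 + (ω*t)^2) ^ (-(n:ℝ)/4) := by
      rw [Complex.norm_real]
      exact abs_of_pos (Real.rpow_pos_of_pos hc _)
    have h2 : ‖lensPhase (ω^2*t/(1+(ω*t)^2)) x‖ = 1 := by
      unfold lensPhase
      rw [Complex.norm_exp]
      simp only [Complex.mul_re, Complex.I_re, Complex.I_im, Complex.ofReal_re,
        Complex.ofReal_im]
      norm_num
    rw [h1, h2, mul_one, Real.mul_rpow (Real.rpow_nonneg hc.le _) (norm_nonneg _)]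
    congr 1
    rw [← Real.rpow_mul hc.le]
    rw [show (-(n:ℝ)/4) * ((4:ℝ)/n) = -1 by field_simp]
    exact Real.rpow_neg_one _
  rw [hnormv, hvW t x]
  have huP := hu (Real.arctan (ω*t)/ω) ((Real.sqrt (1+(ω*t)^2))⁻¹ • x) hs₀
  have hM : laplacianC (u (Real.arctan (ω*t)/ω)) ((Real.sqrt (1+(ω*t)^2))⁻¹ • x)
      = 2 * ((ω:ℂ)^2 * ((‖(Real.sqrt (1+(ω*t)^2))⁻¹ • x‖ : ℝ):ℂ)^2/2
            * u (Real.arctan (ω*t)/ω) ((Real.sqrt (1+(ω*t)^2))⁻¹ • x)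
          + (lam:ℂ) * ((‖u (Real.arctan (ω*t)/ω) ((Real.sqrt (1+(ω*t)^2))⁻¹ • x)‖ ^ ((4:ℝ)/n) : ℝ):ℂ)
            * u (Real.arctan (ω*t)/ω) ((Real.sqrt (1+(ω*t)^2))⁻¹ • x))
        - 2 * Complex.I * deriv (fun s' => u s' ((Real.sqrt (1+(ω*t)^2))⁻¹ • x))
            (Real.arctan (ω*t)/ω) := by
    linear_combination 2 * huP
  rw [hM]
  have hny : ((‖(Real.sqrt (1+(ω*t)^2))⁻¹ • x‖ : ℝ):ℂ) ^2
      = (((1+(ω*t)^2)⁻¹ * ‖x‖^2 : ℝ):ℂ) := by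
    have h1 : (‖(Real.sqrt (1+(ω*t)^2))⁻¹ • x‖ : ℝ) ^2 = (1+(ω*t)^2)⁻¹ * ‖x‖^2 := by
      rw [norm_smul, Real.norm_eq_abs, abs_of_pos (by positivity), mul_pow, inv_pow,
        Real.sq_sqrt hc.le]
    rw [← h1]
    push_cast
    ring
  rw [hny]
  rw [Real.rpow_sub_one hc.ne']
  have hsqne : Real.sqrt (1+(ω*t)^2) ≠ 0 := by positivity
  have hra : ((Real.sqrt (1+(ω*t)^2))⁻¹ : ℝ) ^ 2 = (1+(ω*t)^2)⁻¹ := by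
    rw [inv_pow, Real.sq_sqrt hc.le]
  have hrb : -((2*(ω*t)*ω) / (2 * Real.sqrt (1+(ω*t)^2))) / (Real.sqrt (1+(ω*t)^2))^2
      = -(ω^2*t/(1+(ω*t)^2)) * (Real.sqrt (1+(ω*t)^2))⁻¹ := by
    rw [Real.sq_sqrt hc.le]
    field_simp
  rw [hrb]
  rw [show ((((Real.sqrt (1+(ω*t)^2))⁻¹ : ℝ)):ℂ)^2 = (((1+(ω*t)^2)⁻¹ : ℝ):ℂ) by
    rw [← Complex.ofReal_pow, hra]]
  obtain ⟨D, hDdef⟩ : ∃ D : ℝ, D = (1+(ω*t)^2)⁻¹ := ⟨_, rfl⟩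
  simp only [div_eq_mul_inv, ← inv_pow]
  rw [← hDdef]
  push_cast
  ring_nf
  simp only [Complex.I_sq]
  ring
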